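/- Let σ = (σ_0,…,σ_n) be a changemaker vector, let x be a positive integer, and let k be an integer with 0 ≤ k < p. If V^σ_k = V^σ_{k+1}, then V^σ_{xp+k+1} − V^σ_{xp+k} = x. -/

import Mathlib

open Finset

/-- `σ` is a changemaker vector: all entries are positive and every integer `k` with
`0 ≤ k ≤ σ_0 + ⋯ + σ_n` is the sum of a subset of the entries. -/
def IsChangemaker {n : ℕ} (σ : Fin (n + 1) → ℕ) : Prop :=
  (∀ i, 0 < σ i) ∧
    ∀ k : ℕ, k ≤ ∑ i, σ i → ∃ A : Finset (Fin (n + 1)), ∑ i ∈ A, σ i = k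

/-- `Tcm σ m = T^σ_m`, the maximum of `σ·α` over all `α ∈ ℤ_{≥0}^{n+1}` with
`Σ_j α_j (α_j + 1) ≤ 2m` (the maximum exists: the set is nonempty and bounded). -/
noncomputable def Tcm {n : ℕ} (σ : Fin (n + 1) → ℕ) (m : ℕ) : ℕ :=
  sSup {t : ℕ | ∃ α : Fin (n + 1) → ℕ,
    (∑ j, α j * (α j + 1)) ≤ 2 * m ∧ t = ∑ j, σ j * α j}

/-- `Vcm σ i = V^σ_i`, the `i`-th relevant coefficient of `σ`:
the least `m` with `T^σ_m ≥ i` (and `V^σ_0 = 0`). -/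
noncomputable def Vcm {n : ℕ} (σ : Fin (n + 1) → ℕ) (i : ℕ) : ℕ :=
  sInf {m : ℕ | i ≤ Tcm σ m}

/-- minimal doubled cost to reach value `i` -/
noncomputable def Ccm {n : ℕ} (σ : Fin (n + 1) → ℕ) (i : ℕ) : ℕ :=
  sInf {t : ℕ | ∃ α : Fin (n + 1) → ℕ,
    t = (∑ j, α j * (α j + 1)) ∧ i ≤ ∑ j, σ j * α j}

section CM

variable {n : ℕ} {σ : Fin (n + 1) → ℕ}

lemma ccm_set_nonempty (hpos : ∀ i, 0 < σ i) (i : ℕ) :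
    {t : ℕ | ∃ α : Fin (n + 1) → ℕ,
      t = (∑ j, α j * (α j + 1)) ∧ i ≤ ∑ j, σ j * α j}.Nonempty := by
  refine ⟨_, fun _ => i, rfl, ?_⟩
  calc i = 1 * i := (one_mul i).symm
    _ ≤ σ 0 * i := Nat.mul_le_mul_right i (hpos 0)
    _ ≤ ∑ j, σ j * i := Finset.single_le_sum (f := fun j => σ j * i)
        (fun _ _ => Nat.zero_le _) (Finset.mem_univ 0)

lemma ccm_exists (hpos : ∀ i, 0 < σ i) (i : ℕ) :
    ∃ α : Fin (n + 1) → ℕ,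
      Ccm σ i = (∑ j, α j * (α j + 1)) ∧ i ≤ ∑ j, σ j * α j :=
  Nat.sInf_mem (ccm_set_nonempty hpos i)

lemma ccm_le (i : ℕ) (α : Fin (n + 1) → ℕ) (h : i ≤ ∑ j, σ j * α j) :
    Ccm σ i ≤ ∑ j, α j * (α j + 1) :=
  Nat.sInf_le ⟨α, rfl, h⟩

lemma ccm_even (hpos : ∀ i, 0 < σ i) (i : ℕ) : Even (Ccm σ i) := by
  obtain ⟨α, hα, -⟩ := ccm_exists hpos (σ := σ) i
  rw [hα]
  exact Finset.even_sum _ fun j _ => Nat.even_mul_succ_self (α j)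

/-- `2 * Vcm = Ccm`. -/
lemma two_vcm (hpos : ∀ i, 0 < σ i) (i : ℕ) : 2 * Vcm σ i = Ccm σ i := by
  have hiff : ∀ m : ℕ, i ≤ Tcm σ m ↔ Ccm σ i ≤ 2 * m := by
    intro m
    have hbdd : BddAbove {t : ℕ | ∃ α : Fin (n + 1) → ℕ,
        (∑ j, α j * (α j + 1)) ≤ 2 * m ∧ t = ∑ j, σ j * α j} := by
      refine ⟨(∑ j, σ j) * (2 * m), ?_⟩
      rintro t ⟨α, hc, rfl⟩
      rw [Finset.sum_mul]
      refine Finset.sum_le_sum fun j _ => Nat.mul_le_mul_left _ ?_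
      calc α j ≤ α j * (α j + 1) := Nat.le_mul_of_pos_right _ (Nat.succ_pos _)
        _ ≤ ∑ j', α j' * (α j' + 1) := Finset.single_le_sum
            (f := fun j' => α j' * (α j' + 1)) (fun _ _ => Nat.zero_le _)
            (Finset.mem_univ j)
        _ ≤ 2 * m := hc
    have hne : {t : ℕ | ∃ α : Fin (n + 1) → ℕ,
        (∑ j, α j * (α j + 1)) ≤ 2 * m ∧ t = ∑ j, σ j * α j}.Nonempty :=
      ⟨0, fun _ => 0, by simp, by simp⟩
    constructor
    · intro h
      obtain ⟨α, hc, ht⟩ := Nat.sSup_mem hne hbdd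
      calc Ccm σ i ≤ ∑ j, α j * (α j + 1) := ccm_le i α (ht ▸ h)
        _ ≤ 2 * m := hc
    · intro h
      obtain ⟨α, hα, hg⟩ := ccm_exists hpos (σ := σ) i
      calc i ≤ ∑ j, σ j * α j := hg
        _ ≤ Tcm σ m := le_csSup hbdd ⟨α, by omega, rfl⟩
  have hset : {m : ℕ | i ≤ Tcm σ m} = {m : ℕ | Ccm σ i ≤ 2 * m} := by
    ext m; exact hiff m
  obtain ⟨c, hc⟩ := ccm_even hpos (σ := σ) i
  have hc2 : Ccm σ i = 2 * c := by omega
  rw [Vcm, hset, hc2]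
  have h1 : {m : ℕ | 2 * c ≤ 2 * m} = Set.Ici c := by
    ext m; simp only [Set.mem_setOf_eq, Set.mem_Ici]; omega
  rw [h1, csInf_Ici]

end CM

section Main

variable {n : ℕ} {σ : Fin (n + 1) → ℕ}

/-- helper: two functions agreeing off `j0` have sums related by endpoint swap. -/
lemma sum_swap_point (f g : Fin (n + 1) → ℕ) (j0 : Fin (n + 1))
    (h : ∀ j, j ≠ j0 → f j = g j) :
    ∑ j, f j + g j0 = ∑ j, g j + f j0 := by
  classical
  rw [← Finset.add_sum_erase _ f (Finset.mem_univ j0),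
      ← Finset.add_sum_erase _ g (Finset.mem_univ j0),
      Finset.sum_congr rfl (fun x hx => h x (Finset.ne_of_mem_erase hx))]
  ring

/-- doubled-cost shift identity -/
lemma shift_cost (α : Fin (n + 1) → ℕ) :
    ∑ j, (α j + σ j) * (α j + σ j + 1)
      = ∑ j, α j * (α j + 1) + 2 * (∑ j, σ j * α j) + ∑ j, σ j * (σ j + 1) := by
  have h : ∀ j ∈ Finset.univ (α := Fin (n + 1)),
      (α j + σ j) * (α j + σ j + 1)
        = α j * (α j + 1) + (2 * (σ j * α j) + σ j * (σ j + 1)) := fun j _ => by ring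
  rw [Finset.sum_congr rfl h, Finset.sum_add_distrib, Finset.sum_add_distrib,
    ← Finset.mul_sum]
  ring

lemma ccm_upper (hcm : IsChangemaker σ) (i : ℕ) :
    Ccm σ (i + ∑ j, σ j * σ j)
      ≤ Ccm σ i + 2 * i + ∑ j, σ j * (σ j + 1) := by
  classical
  obtain ⟨α, hα, hg⟩ := ccm_exists hcm.1 i
  set s : ℕ := (∑ j, σ j * α j) - i with hs
  have hgs : ∑ j, σ j * α j = i + s := by omega
  -- s is at most ∑ σ
  have hsle : s ≤ ∑ j, σ j := by
    rcases Nat.eq_zero_or_pos s with h0 | h0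
    · simp [h0]
    · -- find j0 with α j0 > 0
      have hpos_sum : 0 < ∑ j, σ j * α j := by omega
      have hex : ∃ j0, 0 < σ j0 * α j0 := by
        by_contra hno
        push_neg at hno
        have : ∑ j, σ j * α j = 0 :=
          Finset.sum_eq_zero fun j _ => Nat.le_zero.mp (hno j)
        omega
      obtain ⟨j0, hj0⟩ := hex
      have hαj0 : 0 < α j0 := by
        rcases Nat.eq_zero_or_pos (α j0) with h | h
        · rw [h, mul_zero] at hj0; omega
        · exact h
      -- minimality: σ j0 > s
      have hσj0 : s < σ j0 := by
        by_contra hle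
        push_neg at hle
        set α' : Fin (n + 1) → ℕ := fun j => if j = j0 then α j0 - 1 else α j with hα'
        have hne : ∀ j, j ≠ j0 → α' j = α j := fun j hj => by simp [hα', hj]
        have hα'j0 : α' j0 = α j0 - 1 := by simp [hα']
        -- g α'
        have hg1 : ∑ j, (σ j * α' j) + σ j0 * α j0
            = ∑ j, (σ j * α j) + σ j0 * α' j0 :=
          sum_swap_point (fun j => σ j * α' j) (fun j => σ j * α j) j0
            (fun j hj => by show σ j * α' j = σ j * α j; rw [hne j hj])
        have hmul : σ j0 * α' j0 + σ j0 = σ j0 * α j0 := by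
          rw [hα'j0]
          have h1 : α j0 - 1 + 1 = α j0 := by omega
          calc σ j0 * (α j0 - 1) + σ j0 = σ j0 * ((α j0 - 1) + 1) := by ring
            _ = σ j0 * α j0 := by rw [h1]
        have hgα' : i ≤ ∑ j, σ j * α' j := by omega
        -- cost α'
        have hc1 : ∑ j, (α' j * (α' j + 1)) + α j0 * (α j0 + 1)
            = ∑ j, (α j * (α j + 1)) + α' j0 * (α' j0 + 1) :=
          sum_swap_point (fun j => α j * (α j + 1)) (fun j => α' j * (α' j + 1)) j0
            (fun j hj => by show α j * (α j + 1) = α' j * (α' j + 1)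
                            rw [hne j hj]) |>.symm
        obtain ⟨a, ha⟩ : ∃ a, α j0 = a + 1 := ⟨α j0 - 1, by omega⟩
        have hca : α j0 * (α j0 + 1) = α' j0 * (α' j0 + 1) + 2 * (a + 1) := by
          rw [hα'j0, ha]
          simp only [Nat.add_sub_cancel]
          ring
        have hlt : Ccm σ i ≤ ∑ j, α' j * (α' j + 1) := ccm_le i α' hgα'
        omega
      calc s ≤ σ j0 := le_of_lt hσj0
        _ ≤ ∑ j, σ j := Finset.single_le_sum (f := fun j => σ j)
            (fun _ _ => Nat.zero_le _) (Finset.mem_univ j0)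
  obtain ⟨A, hA⟩ := hcm.2 s hsle
  set b : Fin (n + 1) → ℕ := fun j => if j ∈ A then 1 else 0 with hb
  have hbσ : ∀ j, b j ≤ σ j := fun j => by
    by_cases hj : j ∈ A
    · show (if j ∈ A then 1 else 0) ≤ σ j; rw [if_pos hj]; exact hcm.1 j
    · simp [hb, hj]
  set γ : Fin (n + 1) → ℕ := fun j => α j + σ j - b j with hγdef
  have hγb : ∀ j, γ j + b j = α j + σ j := fun j => by
    have := hbσ j; simp only [hγdef]; omega
  -- ∑ σ b = s
  have hσb : ∑ j, σ j * b j = s := by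
    rw [← hA]
    calc ∑ j, σ j * b j = ∑ j, if j ∈ A then σ j else 0 :=
          Finset.sum_congr rfl fun j _ => by by_cases hj : j ∈ A <;> simp [hb, hj]
      _ = ∑ j ∈ A, σ j := by rw [Finset.sum_ite_mem, Finset.univ_inter]
  -- g γ
  have hgγeq : ∑ j, σ j * γ j + ∑ j, σ j * b j
      = ∑ j, σ j * α j + ∑ j, σ j * σ j := by
    rw [← Finset.sum_add_distrib, ← Finset.sum_add_distrib]
    exact Finset.sum_congr rfl fun j _ => by rw [← mul_add, ← mul_add, hγb j]
  have hgγ : i + ∑ j, σ j * σ j ≤ ∑ j, σ j * γ j := by omega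
  -- cost γ
  have hcγ : ∑ j, γ j * (γ j + 1) + 2 * ∑ j, b j * (α j + σ j)
      = ∑ j, (α j + σ j) * (α j + σ j + 1) := by
    rw [Finset.mul_sum, ← Finset.sum_add_distrib]
    refine Finset.sum_congr rfl fun j _ => ?_
    rw [← hγb j]
    by_cases hj : j ∈ A
    · have : b j = 1 := by simp [hb, hj]
      rw [this]; ring
    · have : b j = 0 := by simp [hb, hj]
      rw [this]; ring
  have hX : s ≤ ∑ j, b j * (α j + σ j) := by
    have h1 : ∑ j, b j * (α j + σ j) = ∑ j, b j * α j + ∑ j, b j * σ j := by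
      rw [← Finset.sum_add_distrib]
      exact Finset.sum_congr rfl fun j _ => by ring
    have h2 : ∑ j, b j * σ j = s := by
      rw [← hσb]; exact Finset.sum_congr rfl fun j _ => mul_comm _ _
    omega
  have hshift := shift_cost (σ := σ) α
  have hfinal : Ccm σ (i + ∑ j, σ j * σ j) ≤ ∑ j, γ j * (γ j + 1) :=
    ccm_le _ γ hgγ
  omega

lemma ccm_lower (hpos : ∀ i, 0 < σ i) (i : ℕ) :
    Ccm σ i + 2 * i + ∑ j, σ j * (σ j + 1)
      ≤ Ccm σ (i + ∑ j, σ j * σ j) := by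
  classical
  obtain ⟨γ, hγ, hg⟩ := ccm_exists hpos (i + ∑ j, σ j * σ j)
  set δ : Fin (n + 1) → ℕ := fun j => max (γ j) (σ j) - σ j with hδdef
  have hδσ : ∀ j, δ j + σ j = max (γ j) (σ j) := fun j => by
    simp only [hδdef]; omega
  -- g of max dominates g of γ
  have h1 : ∑ j, σ j * γ j ≤ ∑ j, σ j * max (γ j) (σ j) :=
    Finset.sum_le_sum fun j _ => Nat.mul_le_mul_left _ (le_max_left _ _)
  -- g of max in terms of δ
  have h2 : ∑ j, σ j * max (γ j) (σ j) = ∑ j, σ j * δ j + ∑ j, σ j * σ j := by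
    rw [← Finset.sum_add_distrib]
    exact Finset.sum_congr rfl fun j _ => by rw [← mul_add, hδσ j]
  -- key pointwise inequality summed
  have h3 : ∑ j, max (γ j) (σ j) * (max (γ j) (σ j) + 1) + 2 * ∑ j, σ j * γ j
      ≤ ∑ j, γ j * (γ j + 1) + 2 * ∑ j, σ j * max (γ j) (σ j) := by
    rw [Finset.mul_sum, Finset.mul_sum, ← Finset.sum_add_distrib,
      ← Finset.sum_add_distrib]
    refine Finset.sum_le_sum fun j _ => ?_
    rcases le_total (σ j) (γ j) with h | h
    · rw [max_eq_left h]
    · rw [max_eq_right h]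
      obtain ⟨d, hd⟩ : ∃ d, σ j = γ j + d := ⟨σ j - γ j, by omega⟩
      rw [hd]
      have hdd : d ≤ d * d := by
        rcases Nat.eq_zero_or_pos d with h0 | h0
        · simp [h0]
        · exact Nat.le_mul_of_pos_left d h0
      nlinarith [sq_nonneg d]
  -- cost of max in terms of δ
  have h4 : ∑ j, max (γ j) (σ j) * (max (γ j) (σ j) + 1)
      = ∑ j, δ j * (δ j + 1) + 2 * (∑ j, σ j * δ j) + ∑ j, σ j * (σ j + 1) := by
    rw [← shift_cost δ]
    exact Finset.sum_congr rfl fun j _ => by rw [hδσ j]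
  -- δ reaches level i
  have h5 : Ccm σ i ≤ ∑ j, δ j * (δ j + 1) := by
    refine ccm_le i δ ?_
    omega
  omega

/-- the main identity: `C(i + p) = C(i) + 2 i + Q` -/
lemma ccm_step (hcm : IsChangemaker σ) (i : ℕ) :
    Ccm σ (i + ∑ j, σ j * σ j)
      = Ccm σ i + 2 * i + ∑ j, σ j * (σ j + 1) :=
  le_antisymm (ccm_upper hcm i) (ccm_lower hcm.1 i)

lemma vcm_step (hcm : IsChangemaker σ) (i : ℕ) :
    2 * Vcm σ (i + ∑ j, σ j * σ j)
      = 2 * Vcm σ i + 2 * i + ∑ j, σ j * (σ j + 1) := by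
  rw [two_vcm hcm.1, two_vcm hcm.1, ccm_step hcm]

end Main

theorem stmt_8 {n : ℕ} (σ : Fin (n + 1) → ℕ) (hσ : IsChangemaker σ)
    (x : ℕ) (hx : 0 < x) (k : ℕ) (hk : k < ∑ i, (σ i) ^ 2)
    (hV : Vcm σ k = Vcm σ (k + 1)) :
    Vcm σ (x * (∑ i, (σ i) ^ 2) + k + 1) =
      Vcm σ (x * (∑ i, (σ i) ^ 2) + k) + x := by
  have hPP : ∑ i, (σ i) ^ 2 = ∑ j, σ j * σ j :=
    Finset.sum_congr rfl fun j _ => sq (σ j)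
  rw [hPP]
  have key : ∀ y : ℕ, Vcm σ (y * (∑ j, σ j * σ j) + k + 1)
      = Vcm σ (y * (∑ j, σ j * σ j) + k) + y := by
    intro y
    induction y with
    | zero => simpa using hV.symm
    | succ y ih =>
      have e1 : (y + 1) * (∑ j, σ j * σ j) + k
          = y * (∑ j, σ j * σ j) + k + (∑ j, σ j * σ j) := by ring
      have e2 : (y + 1) * (∑ j, σ j * σ j) + k + 1
          = y * (∑ j, σ j * σ j) + k + 1 + (∑ j, σ j * σ j) := by ring
      have a1 := vcm_step hσ (y * (∑ j, σ j * σ j) + k)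
      have a2 := vcm_step hσ (y * (∑ j, σ j * σ j) + k + 1)
      rw [e2, e1]
      omega
  exact key x
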